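/- arXiv:2108.02683 — 4 statements merged into one kernel-verified Lean document; each statement's English description precedes it below -/
import Mathlib

section
/- Let Λ ∈ ℝ and let r ∈ g_Λ ∧ g_Λ be a skew-symmetric element of g_Λ ⊗ g_Λ. If δ_r(X) = X·r ∈ h ∧ h for every X in the Lorentz subalgebra h = span{K_1,K_2,K_3,J_1,J_2,J_3}, then r ∈ h ∧ h; that is, all components of r of the forms K_a∧P_μ, J_a∧P_μ and P_μ∧P_ν vanish, and r is a linear combination of the elements K_a∧K_b, K_a∧J_b and J_a∧J_b only. -/
namespace NCST

noncomputable section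

/-- The underlying 10-dimensional vector space of `g_Λ`, with basis indices
`0,1,2,3 ↦ P_0,P_1,P_2,P_3`, `4,5,6 ↦ K_1,K_2,K_3`, `7,8,9 ↦ J_1,J_2,J_3`. -/
abbrev V : Type := Fin 10 → ℝ

/-- The `i`-th basis vector. -/
def e (i : Fin 10) : V := Pi.single i 1

/-- The Levi-Civita symbol on `{1,2,3}` (indices shifted to `Fin 3`), `ε_{123} = 1`. -/
def eps (a b c : Fin 3) : ℝ :=
  if (a = 0 ∧ b = 1 ∧ c = 2) ∨ (a = 1 ∧ b = 2 ∧ c = 0) ∨ (a = 2 ∧ b = 0 ∧ c = 1) then 1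
  else if (a = 2 ∧ b = 1 ∧ c = 0) ∨ (a = 1 ∧ b = 0 ∧ c = 2) ∨ (a = 0 ∧ b = 2 ∧ c = 1) then -1
  else 0

/-- Translation generators `P_μ`, `μ = 0,1,2,3`. -/
def Pv (μ : Fin 4) : V := e ⟨μ.1, by have := μ.isLt; omega⟩
/-- Boost generators `K_a`, `a = 1,2,3` (index `a+1` in `Fin 3`-terms). -/
def Kv (a : Fin 3) : V := e ⟨a.1 + 4, by have := a.isLt; omega⟩
/-- Rotation generators `J_a`, `a = 1,2,3`. -/
def Jv (a : Fin 3) : V := e ⟨a.1 + 7, by have := a.isLt; omega⟩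

/-- Labels for the kinematical basis generators. -/
inductive Gen : Type
  | P : Fin 4 → Gen
  | K : Fin 3 → Gen
  | J : Fin 3 → Gen

/-- `[K_a, P_μ]`: equals `P_a` if `μ = 0` and `δ_{ab} P_0` if `μ = b ∈ {1,2,3}`. -/
def KPbra (a : Fin 3) (μ : Fin 4) : V :=
  if μ.1 = 0 then Pv ⟨a.1 + 1, by have := a.isLt; omega⟩
  else if μ.1 = a.1 + 1 then Pv 0 else 0

/-- `[J_a, P_μ]`: equals `0` if `μ = 0` and `ε_{abc} P_c` if `μ = b ∈ {1,2,3}`. -/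
def JPbra (a : Fin 3) (μ : Fin 4) : V :=
  if h : μ.1 = 0 then 0
  else ∑ c : Fin 3, eps a ⟨μ.1 - 1, by have := μ.isLt; omega⟩ c •
    Pv ⟨c.1 + 1, by have := c.isLt; omega⟩

/-- `[P_μ, P_ν]`: `[P_0,P_a] = -Λ K_a`, `[P_a,P_b] = Λ ε_{abc} J_c`. -/
def PPbra (Λ : ℝ) (μ ν : Fin 4) : V :=
  if _hμ : μ.1 = 0 then
    (if _hν : ν.1 = 0 then 0 else (-Λ) • Kv ⟨ν.1 - 1, by have := ν.isLt; omega⟩)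
  else if _hν : ν.1 = 0 then Λ • Kv ⟨μ.1 - 1, by have := μ.isLt; omega⟩
  else Λ • ∑ c : Fin 3, eps ⟨μ.1 - 1, by have := μ.isLt; omega⟩
    ⟨ν.1 - 1, by have := ν.isLt; omega⟩ c • Jv c

/-- `[K_a, K_b] = -ε_{abc} J_c`. -/
def KKbra (a b : Fin 3) : V := -∑ c : Fin 3, eps a b c • Jv c
/-- `[J_a, K_b] = ε_{abc} K_c`. -/
def JKbra (a b : Fin 3) : V := ∑ c : Fin 3, eps a b c • Kv c
/-- `[J_a, J_b] = ε_{abc} J_c`. -/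
def JJbra (a b : Fin 3) : V := ∑ c : Fin 3, eps a b c • Jv c

/-- The bracket of two basis generators of `g_Λ`, as in eq. (1) of the paper. -/
def genBra (Λ : ℝ) : Gen → Gen → V
  | .P μ, .P ν => PPbra Λ μ ν
  | .P μ, .K a => -KPbra a μ
  | .P μ, .J a => -JPbra a μ
  | .K a, .P μ => KPbra a μ
  | .K a, .K b => KKbra a b
  | .K a, .J b => -JKbra b a
  | .J a, .P μ => JPbra a μ
  | .J a, .K b => JKbra a b
  | .J a, .J b => JJbra a b

/-- Decoding of a `Fin 10` index into the corresponding generator label. -/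
def idxGen (i : Fin 10) : Gen :=
  if h : i.1 < 4 then .P ⟨i.1, h⟩
  else if h2 : i.1 < 7 then .K ⟨i.1 - 4, by omega⟩
  else .J ⟨i.1 - 7, by have := i.isLt; omega⟩

/-- The bracket of `g_Λ`, extended bilinearly from the structure constants. -/
def bra (Λ : ℝ) (x y : V) : V :=
  ∑ i : Fin 10, ∑ j : Fin 10, (x i * y j) • genBra Λ (idxGen i) (idxGen j)

/-- Coefficients of elements of `g_Λ ⊗ g_Λ` in the basis `e_i ⊗ e_j`. -/
abbrev T2 : Type := Fin 10 → Fin 10 → ℝ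
/-- Coefficients of elements of `g_Λ ⊗ g_Λ ⊗ g_Λ`. -/
abbrev T3 : Type := Fin 10 → Fin 10 → Fin 10 → ℝ

/-- The diagonal adjoint action `X·(a⊗b) = [X,a]⊗b + a⊗[X,b]` on `g_Λ ⊗ g_Λ`,
in coordinates; `adT Λ X r` is the cocommutator `δ_r(X)`. -/
def adT (Λ : ℝ) (X : V) (r : T2) : T2 :=
  fun k l => (∑ i : Fin 10, r i l * bra Λ X (e i) k) +
    ∑ j : Fin 10, r k j * bra Λ X (e j) l

/-- `x ∧ y := x ⊗ y - y ⊗ x`, in coordinates. -/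
def wedge (x y : V) : T2 := fun i j => x i * y j - x j * y i

/-- The wedge `e_i ∧ e_j` of two basis vectors. -/
def wEl (i j : Fin 10) : T2 := wedge (e i) (e j)

/-- The Schouten bracket `[[r,r]]` of `r ∈ g_Λ ⊗ g_Λ`, in coordinates:
`[[r,r]] = [r_{12},r_{13}] + [r_{12},r_{23}] + [r_{13},r_{23}]`, i.e. for
`r = Σ aᵢ⊗bᵢ`, `[[r,r]] = Σᵢⱼ ([aᵢ,aⱼ]⊗bᵢ⊗bⱼ + aᵢ⊗[bᵢ,aⱼ]⊗bⱼ + aᵢ⊗aⱼ⊗[bᵢ,bⱼ])`. -/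
def schouten (Λ : ℝ) (r : T2) : T3 :=
  fun p q s =>
    ∑ i : Fin 10, ∑ j : Fin 10, ∑ k : Fin 10, ∑ l : Fin 10, r i j * r k l *
      (bra Λ (e i) (e k) p * (if j = q then (1:ℝ) else 0) * (if l = s then (1:ℝ) else 0)
      + (if i = p then (1:ℝ) else 0) * bra Λ (e j) (e k) q * (if l = s then (1:ℝ) else 0)
      + (if i = p then (1:ℝ) else 0) * (if k = q then (1:ℝ) else 0) * bra Λ (e j) (e l) s)

/-- The diagonal adjoint action of `X ∈ g_Λ` on `g_Λ ⊗ g_Λ ⊗ g_Λ`, in coordinates. -/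
def adT3 (Λ : ℝ) (X : V) (T : T3) : T3 :=
  fun p q s => (∑ i : Fin 10, T i q s * bra Λ X (e i) p)
    + (∑ j : Fin 10, T p j s * bra Λ X (e j) q)
    + ∑ k : Fin 10, T p q k * bra Λ X (e k) s

lemma sum10 (f : Fin 10 → ℝ) : ∑ i : Fin 10, f i =
    f 0 + f 1 + f 2 + f 3 + f 4 + f 5 + f 6 + f 7 + f 8 + f 9 := by
  show f 0 + (f 1 + (f 2 + (f 3 + (f 4 + (f 5 + (f 6 + (f 7 + (f 8 + (f 9 + 0))))))))) = _
  ring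

lemma bra_e (Λ : ℝ) (p q k : Fin 10) :
    bra Λ (e p) (e q) k = genBra Λ (idxGen p) (idxGen q) k := by
  simp only [bra, Finset.sum_apply, Pi.smul_apply, smul_eq_mul, e, Pi.single_apply]
  rw [Finset.sum_eq_single p]
  · rw [Finset.sum_eq_single q]
    · simp
    · intro b _ hb; simp [hb]
    · simp
  · intro b _ hb; simp [Finset.sum_eq_zero, hb]
  · simp

set_option maxHeartbeats 2000000 in
/-- If `r ∈ g_Λ ∧ g_Λ` satisfies `δ_r(X) = X·r ∈ h ∧ h` for every
`X` in the Lorentz subalgebra `h = span{K_1,K_2,K_3,J_1,J_2,J_3}` (coordinates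
`4,…,9`), then `r ∈ h ∧ h`: all components of `r` involving a translation index
(`K_a∧P_μ`, `J_a∧P_μ`, `P_μ∧P_ν`) vanish. -/
theorem lorentz_subbialgebra_implies_r_in_hh (Λ : ℝ) (r : T2)
    (hskew : ∀ i j : Fin 10, r j i = -r i j)
    (h : ∀ X : V, (∀ i : Fin 10, i.1 < 4 → X i = 0) →
      ∀ k l : Fin 10, (k.1 < 4 ∨ l.1 < 4) → adT Λ X r k l = 0) :
    ∀ i j : Fin 10, (i.1 < 4 ∨ j.1 < 4) → r i j = 0 := by
  have E : ∀ (p k l : Fin 10), 4 ≤ p.1 → (k.1 < 4 ∨ l.1 < 4) →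
      ((∑ i : Fin 10, r i l * genBra Λ (idxGen p) (idxGen i) k) +
       ∑ j : Fin 10, r k j * genBra Λ (idxGen p) (idxGen j) l) = 0 := by
    intro p k l hp hkl
    have hX : ∀ i : Fin 10, i.1 < 4 → e p i = 0 := by
      intro i hi
      simp only [e, Pi.single_apply]
      rw [if_neg]; intro hip; omega
    have := h (e p) hX k l hkl
    simpa [adT, bra_e] using this
  have h12 := E 4 0 2 (by decide) (by decide)
  rw [sum10, sum10] at h12
  simp (config := { decide := true }) [idxGen, genBra, KPbra, JPbra, KKbra, JKbra, JJbra, PPbra, Pv, Kv, Jv, e, Pi.single_apply, eps, Fin.sum_univ_succ, Finset.sum_apply] at h12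
  have h13 := E 4 0 3 (by decide) (by decide)
  rw [sum10, sum10] at h13
  simp (config := { decide := true }) [idxGen, genBra, KPbra, JPbra, KKbra, JKbra, JJbra, PPbra, Pv, Kv, Jv, e, Pi.single_apply, eps, Fin.sum_univ_succ, Finset.sum_apply] at h13
  have h23 := E 5 0 3 (by decide) (by decide)
  rw [sum10, sum10] at h23
  simp (config := { decide := true }) [idxGen, genBra, KPbra, JPbra, KKbra, JKbra, JJbra, PPbra, Pv, Kv, Jv, e, Pi.single_apply, eps, Fin.sum_univ_succ, Finset.sum_apply] at h23
  have h01 := E 5 2 1 (by decide) (by decide)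
  rw [sum10, sum10] at h01
  simp (config := { decide := true }) [idxGen, genBra, KPbra, JPbra, KKbra, JKbra, JJbra, PPbra, Pv, Kv, Jv, e, Pi.single_apply, eps, Fin.sum_univ_succ, Finset.sum_apply] at h01
  have h02 := E 4 1 2 (by decide) (by decide)
  rw [sum10, sum10] at h02
  simp (config := { decide := true }) [idxGen, genBra, KPbra, JPbra, KKbra, JKbra, JJbra, PPbra, Pv, Kv, Jv, e, Pi.single_apply, eps, Fin.sum_univ_succ, Finset.sum_apply] at h02
  have h03 := E 4 1 3 (by decide) (by decide)
  rw [sum10, sum10] at h03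
  simp (config := { decide := true }) [idxGen, genBra, KPbra, JPbra, KKbra, JKbra, JJbra, PPbra, Pv, Kv, Jv, e, Pi.single_apply, eps, Fin.sum_univ_succ, Finset.sum_apply] at h03
  have h17 := E 5 1 6 (by decide) (by decide)
  rw [sum10, sum10] at h17
  simp (config := { decide := true }) [idxGen, genBra, KPbra, JPbra, KKbra, JKbra, JJbra, PPbra, Pv, Kv, Jv, e, Pi.single_apply, eps, Fin.sum_univ_succ, Finset.sum_apply] at h17
  have h18 := E 6 1 4 (by decide) (by decide)
  rw [sum10, sum10] at h18
  simp (config := { decide := true }) [idxGen, genBra, KPbra, JPbra, KKbra, JKbra, JJbra, PPbra, Pv, Kv, Jv, e, Pi.single_apply, eps, Fin.sum_univ_succ, Finset.sum_apply] at h18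
  have h19 := E 5 1 4 (by decide) (by decide)
  rw [sum10, sum10] at h19
  simp (config := { decide := true }) [idxGen, genBra, KPbra, JPbra, KKbra, JKbra, JJbra, PPbra, Pv, Kv, Jv, e, Pi.single_apply, eps, Fin.sum_univ_succ, Finset.sum_apply] at h19
  have h27 := E 6 2 5 (by decide) (by decide)
  rw [sum10, sum10] at h27
  simp (config := { decide := true }) [idxGen, genBra, KPbra, JPbra, KKbra, JKbra, JJbra, PPbra, Pv, Kv, Jv, e, Pi.single_apply, eps, Fin.sum_univ_succ, Finset.sum_apply] at h27
  have h28 := E 6 2 4 (by decide) (by decide)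
  rw [sum10, sum10] at h28
  simp (config := { decide := true }) [idxGen, genBra, KPbra, JPbra, KKbra, JKbra, JJbra, PPbra, Pv, Kv, Jv, e, Pi.single_apply, eps, Fin.sum_univ_succ, Finset.sum_apply] at h28
  have h29 := E 4 2 5 (by decide) (by decide)
  rw [sum10, sum10] at h29
  simp (config := { decide := true }) [idxGen, genBra, KPbra, JPbra, KKbra, JKbra, JJbra, PPbra, Pv, Kv, Jv, e, Pi.single_apply, eps, Fin.sum_univ_succ, Finset.sum_apply] at h29
  have h37 := E 5 3 6 (by decide) (by decide)
  rw [sum10, sum10] at h37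
  simp (config := { decide := true }) [idxGen, genBra, KPbra, JPbra, KKbra, JKbra, JJbra, PPbra, Pv, Kv, Jv, e, Pi.single_apply, eps, Fin.sum_univ_succ, Finset.sum_apply] at h37
  have h38 := E 4 3 6 (by decide) (by decide)
  rw [sum10, sum10] at h38
  simp (config := { decide := true }) [idxGen, genBra, KPbra, JPbra, KKbra, JKbra, JJbra, PPbra, Pv, Kv, Jv, e, Pi.single_apply, eps, Fin.sum_univ_succ, Finset.sum_apply] at h38
  have h39 := E 4 3 5 (by decide) (by decide)
  rw [sum10, sum10] at h39
  simp (config := { decide := true }) [idxGen, genBra, KPbra, JPbra, KKbra, JKbra, JJbra, PPbra, Pv, Kv, Jv, e, Pi.single_apply, eps, Fin.sum_univ_succ, Finset.sum_apply] at h39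
  have h04 := E 4 1 4 (by decide) (by decide)
  rw [sum10, sum10] at h04
  simp (config := { decide := true }) [idxGen, genBra, KPbra, JPbra, KKbra, JKbra, JJbra, PPbra, Pv, Kv, Jv, e, Pi.single_apply, eps, Fin.sum_univ_succ, Finset.sum_apply] at h04
  have h05 := E 5 2 5 (by decide) (by decide)
  rw [sum10, sum10] at h05
  simp (config := { decide := true }) [idxGen, genBra, KPbra, JPbra, KKbra, JKbra, JJbra, PPbra, Pv, Kv, Jv, e, Pi.single_apply, eps, Fin.sum_univ_succ, Finset.sum_apply] at h05
  have h06 := E 6 3 6 (by decide) (by decide)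
  rw [sum10, sum10] at h06
  simp (config := { decide := true }) [idxGen, genBra, KPbra, JPbra, KKbra, JKbra, JJbra, PPbra, Pv, Kv, Jv, e, Pi.single_apply, eps, Fin.sum_univ_succ, Finset.sum_apply] at h06
  have h14 := E 5 1 9 (by decide) (by decide)
  rw [sum10, sum10] at h14
  simp (config := { decide := true }) [idxGen, genBra, KPbra, JPbra, KKbra, JKbra, JJbra, PPbra, Pv, Kv, Jv, e, Pi.single_apply, eps, Fin.sum_univ_succ, Finset.sum_apply] at h14
  have h15 := E 6 1 7 (by decide) (by decide)
  rw [sum10, sum10] at h15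
  simp (config := { decide := true }) [idxGen, genBra, KPbra, JPbra, KKbra, JKbra, JJbra, PPbra, Pv, Kv, Jv, e, Pi.single_apply, eps, Fin.sum_univ_succ, Finset.sum_apply] at h15
  have h16 := E 5 1 7 (by decide) (by decide)
  rw [sum10, sum10] at h16
  simp (config := { decide := true }) [idxGen, genBra, KPbra, JPbra, KKbra, JKbra, JJbra, PPbra, Pv, Kv, Jv, e, Pi.single_apply, eps, Fin.sum_univ_succ, Finset.sum_apply] at h16
  have h24 := E 6 2 8 (by decide) (by decide)
  rw [sum10, sum10] at h24
  simp (config := { decide := true }) [idxGen, genBra, KPbra, JPbra, KKbra, JKbra, JJbra, PPbra, Pv, Kv, Jv, e, Pi.single_apply, eps, Fin.sum_univ_succ, Finset.sum_apply] at h24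
  have h25 := E 6 2 7 (by decide) (by decide)
  rw [sum10, sum10] at h25
  simp (config := { decide := true }) [idxGen, genBra, KPbra, JPbra, KKbra, JKbra, JJbra, PPbra, Pv, Kv, Jv, e, Pi.single_apply, eps, Fin.sum_univ_succ, Finset.sum_apply] at h25
  have h26 := E 4 2 8 (by decide) (by decide)
  rw [sum10, sum10] at h26
  simp (config := { decide := true }) [idxGen, genBra, KPbra, JPbra, KKbra, JKbra, JJbra, PPbra, Pv, Kv, Jv, e, Pi.single_apply, eps, Fin.sum_univ_succ, Finset.sum_apply] at h26
  have h34 := E 5 3 9 (by decide) (by decide)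
  rw [sum10, sum10] at h34
  simp (config := { decide := true }) [idxGen, genBra, KPbra, JPbra, KKbra, JKbra, JJbra, PPbra, Pv, Kv, Jv, e, Pi.single_apply, eps, Fin.sum_univ_succ, Finset.sum_apply] at h34
  have h35 := E 4 3 9 (by decide) (by decide)
  rw [sum10, sum10] at h35
  simp (config := { decide := true }) [idxGen, genBra, KPbra, JPbra, KKbra, JKbra, JJbra, PPbra, Pv, Kv, Jv, e, Pi.single_apply, eps, Fin.sum_univ_succ, Finset.sum_apply] at h35
  have h36 := E 4 3 8 (by decide) (by decide)
  rw [sum10, sum10] at h36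
  simp (config := { decide := true }) [idxGen, genBra, KPbra, JPbra, KKbra, JKbra, JJbra, PPbra, Pv, Kv, Jv, e, Pi.single_apply, eps, Fin.sum_univ_succ, Finset.sum_apply] at h36
  have h07 := E 4 1 7 (by decide) (by decide)
  rw [sum10, sum10] at h07
  simp (config := { decide := true }) [idxGen, genBra, KPbra, JPbra, KKbra, JKbra, JJbra, PPbra, Pv, Kv, Jv, e, Pi.single_apply, eps, Fin.sum_univ_succ, Finset.sum_apply] at h07
  have h08 := E 5 2 8 (by decide) (by decide)
  rw [sum10, sum10] at h08
  simp (config := { decide := true }) [idxGen, genBra, KPbra, JPbra, KKbra, JKbra, JJbra, PPbra, Pv, Kv, Jv, e, Pi.single_apply, eps, Fin.sum_univ_succ, Finset.sum_apply] at h08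
  have h09 := E 6 3 9 (by decide) (by decide)
  rw [sum10, sum10] at h09
  simp (config := { decide := true }) [idxGen, genBra, KPbra, JPbra, KKbra, JKbra, JJbra, PPbra, Pv, Kv, Jv, e, Pi.single_apply, eps, Fin.sum_univ_succ, Finset.sum_apply] at h09

  have hdiag : ∀ i : Fin 10, r i i = 0 := fun i => by have := hskew i i; linarith
  have hsym : ∀ i j : Fin 10, r i j = 0 → r j i = 0 := fun i j hij => by
    rw [hskew, hij, neg_zero]
  have hrow : ∀ (i j : Fin 10), i.1 < 4 → r i j = 0 := by
    intro i j hi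
    fin_cases i <;> fin_cases j <;>
      first
        | exact hdiag _
        | assumption
        | (apply hsym; assumption)
        | exact absurd hi (by decide)
  intro i j hij
  by_cases hi : i.1 < 4
  · exact hrow i j hi
  · rw [hskew j i, hrow j i (by omega), neg_zero]

end
end NCST
end

section
/- Let Λ ∈ ℝ and let r ∈ g_Λ^{2+1} ∧ g_Λ^{2+1} be a skew-symmetric element of g_Λ^{2+1} ⊗ g_Λ^{2+1}. If X·r ∈ h^{2+1} ∧ h^{2+1} for every X ∈ h^{2+1} = span{K_1,K_2,J_3}, then there exist real numbers a_2, b_2, c_2, c_1 such that r = a_2 J_3∧K_1 + b_2 J_3∧K_2 + c_2 K_1∧K_2 + c_1 (J_3∧P_0 − P_1∧K_2 + P_2∧K_1). -/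
set_option maxHeartbeats 1000000


namespace NCST3

noncomputable section

/-- The underlying 6-dimensional vector space of `g_Λ^{2+1}`, with basis indices
`0,1,2 ↦ P_0,P_1,P_2`, `3 ↦ K_1`, `4 ↦ K_2`, `5 ↦ J_3`. -/
abbrev V6 : Type := Fin 6 → ℝ

/-- The `i`-th basis vector. -/
def e6 (i : Fin 6) : V6 := Pi.single i 1

/-- The bracket `[X_i, X_j]` of two basis generators of `g_Λ^{2+1}`:
`[J_3,P_1]=P_2`, `[J_3,P_2]=−P_1`, `[J_3,K_1]=K_2`, `[J_3,K_2]=−K_1`, `[J_3,P_0]=0`,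
`[K_a,P_0]=P_a`, `[K_a,P_b]=δ_{ab}P_0`, `[K_1,K_2]=−J_3`,
`[P_0,P_a]=−Λ K_a`, `[P_1,P_2]=Λ J_3`. -/
def braB6 (Λ : ℝ) : Fin 6 → Fin 6 → V6 :=
  ![![0, (-Λ) • e6 3, (-Λ) • e6 4, -e6 1, -e6 2, 0],
    ![Λ • e6 3, 0, Λ • e6 5, -e6 0, 0, -e6 2],
    ![Λ • e6 4, (-Λ) • e6 5, 0, 0, -e6 0, e6 1],
    ![e6 1, e6 0, 0, 0, -e6 5, -e6 4],
    ![e6 2, 0, e6 0, e6 5, 0, e6 3],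
    ![0, e6 2, -e6 1, e6 4, -e6 3, 0]]

/-- The bracket of `g_Λ^{2+1}`, extended bilinearly from the structure constants. -/
def bra6 (Λ : ℝ) (x y : V6) : V6 :=
  ∑ i : Fin 6, ∑ j : Fin 6, (x i * y j) • braB6 Λ i j

/-- Coefficients of elements of `g_Λ^{2+1} ⊗ g_Λ^{2+1}`. -/
abbrev T2₆ : Type := Fin 6 → Fin 6 → ℝ
/-- Coefficients of elements of the triple tensor power of `g_Λ^{2+1}`. -/
abbrev T3₆ : Type := Fin 6 → Fin 6 → Fin 6 → ℝ

/-- The diagonal adjoint action `X·(a⊗b) = [X,a]⊗b + a⊗[X,b]`, in coordinates. -/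
def adT6 (Λ : ℝ) (X : V6) (r : T2₆) : T2₆ :=
  fun k l => (∑ i : Fin 6, r i l * bra6 Λ X (e6 i) k) +
    ∑ j : Fin 6, r k j * bra6 Λ X (e6 j) l

/-- `x ∧ y := x ⊗ y - y ⊗ x`, in coordinates. -/
def wedge6 (x y : V6) : T2₆ := fun i j => x i * y j - x j * y i

/-- The wedge `e_i ∧ e_j` of two basis vectors. -/
def wEl6 (i j : Fin 6) : T2₆ := wedge6 (e6 i) (e6 j)

/-- The Schouten bracket `[[r,r]]`, in coordinates: for `r = Σ aᵢ⊗bᵢ`,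
`[[r,r]] = Σᵢⱼ ([aᵢ,aⱼ]⊗bᵢ⊗bⱼ + aᵢ⊗[bᵢ,aⱼ]⊗bⱼ + aᵢ⊗aⱼ⊗[bᵢ,bⱼ])`. -/
def schouten6 (Λ : ℝ) (r : T2₆) : T3₆ :=
  fun p q s =>
    ∑ i : Fin 6, ∑ j : Fin 6, ∑ k : Fin 6, ∑ l : Fin 6, r i j * r k l *
      (bra6 Λ (e6 i) (e6 k) p * (if j = q then (1:ℝ) else 0) * (if l = s then (1:ℝ) else 0)
      + (if i = p then (1:ℝ) else 0) * bra6 Λ (e6 j) (e6 k) q * (if l = s then (1:ℝ) else 0)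
      + (if i = p then (1:ℝ) else 0) * (if k = q then (1:ℝ) else 0) * bra6 Λ (e6 j) (e6 l) s)

/-- The diagonal adjoint action of `X` on the triple tensor power, in coordinates. -/
def adT36 (Λ : ℝ) (X : V6) (T : T3₆) : T3₆ :=
  fun p q s => (∑ i : Fin 6, T i q s * bra6 Λ X (e6 i) p)
    + (∑ j : Fin 6, T p j s * bra6 Λ X (e6 j) q)
    + ∑ k : Fin 6, T p q k * bra6 Λ X (e6 k) s

/-- The special (2+1)D element `J_3∧P_0 − P_1∧K_2 + P_2∧K_1`
(`J_3 = e_5`, `P_0 = e_0`, `P_1 = e_1`, `P_2 = e_2`, `K_1 = e_3`, `K_2 = e_4`). -/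
def rSpec : T2₆ := wEl6 5 0 - wEl6 1 4 + wEl6 2 3

lemma cons_val_five {α : Type*} {m : ℕ} (x : α) (u : Fin (m+5) → α) :
    Matrix.vecCons x u 5 = Matrix.vecHead (Matrix.vecTail (Matrix.vecTail (Matrix.vecTail
      (Matrix.vecTail u)))) := rfl

lemma bra6_e (Λ : ℝ) (a b : Fin 6) : bra6 Λ (e6 a) (e6 b) = braB6 Λ a b := by
  simp [bra6, e6, Pi.single_apply, ite_smul, Finset.sum_ite_eq']

lemma adT6_e (Λ : ℝ) (x : Fin 6) (r : T2₆) (k l : Fin 6) :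
    adT6 Λ (e6 x) r k l =
      (∑ i : Fin 6, r i l * braB6 Λ x i k) + ∑ j : Fin 6, r k j * braB6 Λ x j l := by
  simp [adT6, bra6_e]

/-- If a skew tensor `r ∈ g_Λ^{2+1} ∧ g_Λ^{2+1}` satisfies
`X·r ∈ h^{2+1} ∧ h^{2+1}` for every `X ∈ h^{2+1} = span{K_1,K_2,J_3}` (coordinates
`3,4,5`), then `r = a₂ J_3∧K_1 + b₂ J_3∧K_2 + c₂ K_1∧K_2 + c₁(J_3∧P_0 − P_1∧K_2 + P_2∧K_1)`
for some reals `a₂, b₂, c₂, c₁`. -/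
theorem lorentz21_subbialgebra_classification (Λ : ℝ) (r : T2₆)
    (hskew : ∀ i j : Fin 6, r j i = -r i j)
    (h : ∀ X : V6, (X 0 = 0 ∧ X 1 = 0 ∧ X 2 = 0) →
      ∀ k l : Fin 6, (k.1 < 3 ∨ l.1 < 3) → adT6 Λ X r k l = 0) :
    ∃ a₂ b₂ c₂ c₁ : ℝ,
      r = a₂ • wEl6 5 3 + b₂ • wEl6 5 4 + c₂ • wEl6 3 4 + c₁ • rSpec := by
  refine ⟨r 5 3, r 5 4, r 3 4, r 5 0, ?_⟩
  have E0 := h (e6 3) (by simp [e6]) 0 2 (by decide)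
  rw [adT6_e] at E0
  simp [Fin.sum_univ_six, braB6, e6, Pi.single_apply, Matrix.cons_val_zero, Matrix.cons_val_one,
    Matrix.head_cons, Matrix.cons_val', Matrix.cons_val_fin_one, Matrix.empty_val',
    Matrix.head_fin_const, Matrix.cons_val_succ, cons_val_five, Matrix.vecHead, Matrix.vecTail] at E0
  have E1 := h (e6 3) (by simp [e6]) 0 3 (by decide)
  rw [adT6_e] at E1
  simp [Fin.sum_univ_six, braB6, e6, Pi.single_apply, Matrix.cons_val_zero, Matrix.cons_val_one,
    Matrix.head_cons, Matrix.cons_val', Matrix.cons_val_fin_one, Matrix.empty_val',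
    Matrix.head_fin_const, Matrix.cons_val_succ, cons_val_five, Matrix.vecHead, Matrix.vecTail] at E1
  have E2 := h (e6 3) (by simp [e6]) 1 2 (by decide)
  rw [adT6_e] at E2
  simp [Fin.sum_univ_six, braB6, e6, Pi.single_apply, Matrix.cons_val_zero, Matrix.cons_val_one,
    Matrix.head_cons, Matrix.cons_val', Matrix.cons_val_fin_one, Matrix.empty_val',
    Matrix.head_fin_const, Matrix.cons_val_succ, cons_val_five, Matrix.vecHead, Matrix.vecTail] at E2
  have E3 := h (e6 3) (by simp [e6]) 1 3 (by decide)
  rw [adT6_e] at E3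
  simp [Fin.sum_univ_six, braB6, e6, Pi.single_apply, Matrix.cons_val_zero, Matrix.cons_val_one,
    Matrix.head_cons, Matrix.cons_val', Matrix.cons_val_fin_one, Matrix.empty_val',
    Matrix.head_fin_const, Matrix.cons_val_succ, cons_val_five, Matrix.vecHead, Matrix.vecTail] at E3
  have E4 := h (e6 4) (by simp [e6]) 2 1 (by decide)
  rw [adT6_e] at E4
  simp [Fin.sum_univ_six, braB6, e6, Pi.single_apply, Matrix.cons_val_zero, Matrix.cons_val_one,
    Matrix.head_cons, Matrix.cons_val', Matrix.cons_val_fin_one, Matrix.empty_val',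
    Matrix.head_fin_const, Matrix.cons_val_succ, cons_val_five, Matrix.vecHead, Matrix.vecTail] at E4
  have E5 := h (e6 5) (by simp [e6]) 0 3 (by decide)
  rw [adT6_e] at E5
  simp [Fin.sum_univ_six, braB6, e6, Pi.single_apply, Matrix.cons_val_zero, Matrix.cons_val_one,
    Matrix.head_cons, Matrix.cons_val', Matrix.cons_val_fin_one, Matrix.empty_val',
    Matrix.head_fin_const, Matrix.cons_val_succ, cons_val_five, Matrix.vecHead, Matrix.vecTail] at E5
  have E6 := h (e6 4) (by simp [e6]) 0 3 (by decide)
  rw [adT6_e] at E6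
  simp [Fin.sum_univ_six, braB6, e6, Pi.single_apply, Matrix.cons_val_zero, Matrix.cons_val_one,
    Matrix.head_cons, Matrix.cons_val', Matrix.cons_val_fin_one, Matrix.empty_val',
    Matrix.head_fin_const, Matrix.cons_val_succ, cons_val_five, Matrix.vecHead, Matrix.vecTail] at E6
  have E7 := h (e6 3) (by simp [e6]) 0 4 (by decide)
  rw [adT6_e] at E7
  simp [Fin.sum_univ_six, braB6, e6, Pi.single_apply, Matrix.cons_val_zero, Matrix.cons_val_one,
    Matrix.head_cons, Matrix.cons_val', Matrix.cons_val_fin_one, Matrix.empty_val',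
    Matrix.head_fin_const, Matrix.cons_val_succ, cons_val_five, Matrix.vecHead, Matrix.vecTail] at E7
  have E8 := h (e6 5) (by simp [e6]) 2 5 (by decide)
  rw [adT6_e] at E8
  simp [Fin.sum_univ_six, braB6, e6, Pi.single_apply, Matrix.cons_val_zero, Matrix.cons_val_one,
    Matrix.head_cons, Matrix.cons_val', Matrix.cons_val_fin_one, Matrix.empty_val',
    Matrix.head_fin_const, Matrix.cons_val_succ, cons_val_five, Matrix.vecHead, Matrix.vecTail] at E8
  have E9 := h (e6 5) (by simp [e6]) 1 5 (by decide)
  rw [adT6_e] at E9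
  simp [Fin.sum_univ_six, braB6, e6, Pi.single_apply, Matrix.cons_val_zero, Matrix.cons_val_one,
    Matrix.head_cons, Matrix.cons_val', Matrix.cons_val_fin_one, Matrix.empty_val',
    Matrix.head_fin_const, Matrix.cons_val_succ, cons_val_five, Matrix.vecHead, Matrix.vecTail] at E9
  have E10 := h (e6 3) (by simp [e6]) 2 5 (by decide)
  rw [adT6_e] at E10
  simp [Fin.sum_univ_six, braB6, e6, Pi.single_apply, Matrix.cons_val_zero, Matrix.cons_val_one,
    Matrix.head_cons, Matrix.cons_val', Matrix.cons_val_fin_one, Matrix.empty_val',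
    Matrix.head_fin_const, Matrix.cons_val_succ, cons_val_five, Matrix.vecHead, Matrix.vecTail] at E10
  funext k l
  have hs := fun i j => hskew i j
  fin_cases k <;> fin_cases l <;>
    simp [wEl6, wedge6, rSpec, e6, Pi.single_apply] <;>
    linarith [hs 0 1, hs 0 2, hs 0 3, hs 0 4, hs 0 5, hs 1 2, hs 1 3, hs 1 4, hs 1 5,
      hs 2 3, hs 2 4, hs 2 5, hs 3 4, hs 3 5, hs 4 5, hs 0 0, hs 1 1, hs 2 2, hs 3 3, hs 4 4, hs 5 5]

end
end NCST3
end

section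
/- Let A be an associative unital ℝ-algebra, z ∈ ℝ, and let x⁻, x⁺, y, w ∈ A satisfy the Type III noncommutative spacetime relations: [y,x⁺] = z(x⁺)², [y,x⁻] = −z x⁻x⁺, [x⁻,x⁺] = 2z x⁺y, and w commutes with each of x⁻, x⁺, y, where [a,b] := ab − ba. Then the quantum Casimir element Ĉ = x⁻x⁺ − y² commutes with each of x⁻, x⁺, y, w (is central in the subalgebra generated by these elements). -/
/-- In an associative unital ℝ-algebra `A`, if `x⁻, x⁺, y, w`
satisfy the Type III noncommutative spacetime relations
`[y,x⁺] = z(x⁺)²`, `[y,x⁻] = −z x⁻x⁺`, `[x⁻,x⁺] = 2z x⁺y`, and `w` commutes with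
`x⁻, x⁺, y`, then the quantum Casimir `Ĉ = x⁻x⁺ − y²` commutes with each of
`x⁻, x⁺, y, w`. -/
theorem typeIII_quantum_casimir_central {A : Type*} [Ring A] [Algebra ℝ A]
    (z : ℝ) (xm xp y w : A)
    (h1 : y * xp - xp * y = z • xp ^ 2)
    (h2 : y * xm - xm * y = -(z • (xm * xp)))
    (h3 : xm * xp - xp * xm = (2 * z) • (xp * y))
    (h4 : w * xm = xm * w) (h5 : w * xp = xp * w) (h6 : w * y = y * w) :
    Commute (xm * xp - y ^ 2) xm ∧
    Commute (xm * xp - y ^ 2) xp ∧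
    Commute (xm * xp - y ^ 2) y ∧
    Commute (xm * xp - y ^ 2) w := by
  refine ⟨?_, ?_, ?_, ?_⟩
  · show (xm * xp - y ^ 2) * xm = xm * (xm * xp - y ^ 2)
    have e3 := congrArg (fun t => xm * t) h3
    have e2l := congrArg (fun t => y * t) h2
    have e2r := congrArg (fun t => t * y) h2
    have e2p := congrArg (fun t => z • (t * xp)) h2
    have e1m := congrArg (fun t => z • (xm * t)) h1
    simp only [smul_sub, smul_neg, two_mul, add_smul, mul_smul_comm, smul_mul_assoc, mul_sub, sub_mul,
      mul_neg, neg_mul, mul_assoc, smul_smul] at e3 e2l e2r e2p e1m ⊢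
    linear_combination (norm := noncomm_ring) -e3 - e2l - e2r + e2p + e1m
  · show (xm * xp - y ^ 2) * xp = xp * (xm * xp - y ^ 2)
    have e3 := congrArg (fun t => t * xp) h3
    have e1l := congrArg (fun t => y * t) h1
    have e1r := congrArg (fun t => t * y) h1
    have e1p := congrArg (fun t => z • (xp * t)) h1
    have e1q := congrArg (fun t => z • (t * xp)) h1
    simp only [smul_sub, smul_neg, two_mul, add_smul, mul_smul_comm, smul_mul_assoc, mul_sub, sub_mul,
      mul_neg, neg_mul, mul_assoc, smul_smul] at e3 e1l e1r e1p e1q ⊢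
    linear_combination (norm := noncomm_ring) e3 - e1l - e1r + e1p - e1q
  · show (xm * xp - y ^ 2) * y = y * (xm * xp - y ^ 2)
    have e2p := congrArg (fun t => t * xp) h2
    have e1m := congrArg (fun t => xm * t) h1
    simp only [smul_sub, smul_neg, two_mul, add_smul, mul_smul_comm, smul_mul_assoc, mul_sub, sub_mul,
      mul_neg, neg_mul, mul_assoc, smul_smul] at e2p e1m ⊢
    linear_combination (norm := noncomm_ring) -e2p - e1m
  · show (xm * xp - y ^ 2) * w = w * (xm * xp - y ^ 2)
    linear_combination (norm := noncomm_ring) -(h4 * xp) - (xm * h5) + (h6 * y) + (y * h6)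
end

section
/- Let A be an associative unital ℝ-algebra, z ∈ ℝ, and let t, u, y, w ∈ A satisfy: t commutes with u, y and w; [u,y] = z t w; [u,w] = −z t y; [y,w] = 0, where [a,b] := ab − ba. Then the element y² + w² commutes with each of t, u, y, w. (This covers both the Type II noncommutative Galilei spacetime, with t = x̂⁰ the central quantum time coordinate and u = x̂¹, y = x̂², w = x̂³, and the Type II noncommutative Carroll spacetime, with t = x̂¹ the central quantum space coordinate and u = x̂⁰, y = x̂², w = x̂³.) -/
/-- In an associative unital ℝ-algebra `A`, if `t` commutes with
`u, y, w`, `[u,y] = z t w`, `[u,w] = −z t y` and `[y,w] = 0`, then `y² + w²`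
commutes with each of `t, u, y, w`. (Type II noncommutative Galilei spacetime:
`t = x̂⁰`, `u = x̂¹`, `y = x̂²`, `w = x̂³`; Type II noncommutative Carroll spacetime:
`t = x̂¹`, `u = x̂⁰`, `y = x̂²`, `w = x̂³`.) -/
theorem typeII_galilei_carroll_casimir_central {A : Type*} [Ring A] [Algebra ℝ A]
    (z : ℝ) (t u y w : A)
    (ht1 : t * u = u * t) (ht2 : t * y = y * t) (ht3 : t * w = w * t)
    (h1 : u * y - y * u = z • (t * w))
    (h2 : u * w - w * u = -(z • (t * y)))
    (h3 : y * w = w * y) :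
    Commute (y ^ 2 + w ^ 2) t ∧
    Commute (y ^ 2 + w ^ 2) u ∧
    Commute (y ^ 2 + w ^ 2) y ∧
    Commute (y ^ 2 + w ^ 2) w := by
  have cy : Commute y t := ht2.symm
  have cw : Commute w t := ht3.symm
  have cyw : Commute y w := h3
  set c : A := algebraMap ℝ A z with hcdef
  have hc : ∀ a : A, c * a = a * c := fun a => Algebra.commutes z a
  have h1' : u * y - y * u = c * (t * w) := by rw [h1, Algebra.smul_def]
  have h2' : u * w - w * u = -(c * (t * y)) := by rw [h2, Algebra.smul_def]
  refine ⟨?_, ?_, ?_, ?_⟩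
  · exact ((cy.pow_left 2).add_left (cw.pow_left 2))
  · show (y ^ 2 + w ^ 2) * u = u * (y ^ 2 + w ^ 2)
    have A1 : c * (t * w) * y = c * (t * (y * w)) := by
      rw [mul_assoc, mul_assoc, ← h3]
    have A2 : y * (c * (t * w)) = c * (t * (y * w)) := by
      calc y * (c * (t * w)) = (y * c) * (t * w) := by rw [mul_assoc]
        _ = (c * y) * (t * w) := by rw [hc]
        _ = c * ((y * t) * w) := by rw [mul_assoc, ← mul_assoc y]
        _ = c * ((t * y) * w) := by rw [← ht2]
        _ = c * (t * (y * w)) := by rw [mul_assoc]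
    have A3 : c * (t * y) * w = c * (t * (y * w)) := by
      rw [mul_assoc, mul_assoc]
    have A4 : w * (c * (t * y)) = c * (t * (y * w)) := by
      calc w * (c * (t * y)) = (w * c) * (t * y) := by rw [mul_assoc]
        _ = (c * w) * (t * y) := by rw [hc]
        _ = c * ((w * t) * y) := by rw [mul_assoc, ← mul_assoc w]
        _ = c * ((t * w) * y) := by rw [← ht3]
        _ = c * (t * (w * y)) := by rw [mul_assoc]
        _ = c * (t * (y * w)) := by rw [← h3]
    have key : u * (y ^ 2 + w ^ 2) - (y ^ 2 + w ^ 2) * u = 0 := by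
      have expand : u * (y ^ 2 + w ^ 2) - (y ^ 2 + w ^ 2) * u =
          (u * y - y * u) * y + y * (u * y - y * u) +
          ((u * w - w * u) * w + w * (u * w - w * u)) := by noncomm_ring
      rw [expand, h1', h2']
      simp only [neg_mul, mul_neg]
      rw [A1, A2, A3, A4]
      abel
    have := sub_eq_zero.mp key
    exact this.symm
  · exact ((Commute.refl y).pow_left 2).add_left (cyw.symm.pow_left 2)
  · exact ((cyw.pow_left 2).add_left ((Commute.refl w).pow_left 2))
end
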